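/- Let r ≥ 1, let A₀ ∈ ℝ^{r×r} be the nilpotent upper-shift matrix, and let ξ(s) := (s^{r−1}/(r−1)!, …, s, 1)ᵀ ∈ ℝ^r. Let t > 0; for i ∈ {A, B} let x₀^i ∈ ℝ^r and let α^i, β^i : [0,t] → ℝ be continuous with α^i(s) ≤ β^i(s), and let X_t^i := { exp(tA₀)x₀^i + ∫₀ᵗ ξ(s) u(s) ds : u measurable, α^i(s) ≤ u(s) ≤ β^i(s) for all s }. Set μ^i(s) := (β^i(s) − α^i(s))/2, ν^i(s) := (β^i(s) + α^i(s))/2, c(t) := exp(tA₀)(x₀^A − x₀^B) + ∫₀ᵗ (ν^A(s) − ν^B(s)) ξ(s) ds, and f(y) := ⟨c(t), y⟩ + ∫₀ᵗ (μ^A(s) + μ^B(s)) |⟨y, ξ(s)⟩| ds. Let p̃* := min_{‖y‖₂ ≤ 1} f(y) and p* := min_{‖y‖₂ = 1} f(y). If p̃* < 0, then p̃* = p* < 0 and X_t^A ∩ X_t^B = ∅. -/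

import Mathlib

noncomputable section
open Matrix MeasureTheory TopologicalSpace Filter
open scoped ENNReal Pointwise

/-- The `r × r` nilpotent upper-shift matrix `N` with `N_{a,a+1} = 1`. -/
def shiftMat (r : ℕ) : Matrix (Fin r) (Fin r) ℝ :=
  fun a b => if (b : ℕ) = (a : ℕ) + 1 then 1 else 0

/-- `ξ(s) = (s^{r-1}/(r-1)!, …, s, 1)ᵀ ∈ ℝ^r`. -/
def xi (r : ℕ) (s : ℝ) : Fin r → ℝ :=
  fun a => s ^ (r - 1 - (a : ℕ)) / (Nat.factorial (r - 1 - (a : ℕ)))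

/-- Support function `h_K(y) = sup_{x ∈ K} ⟨y, x⟩` of a set `K`. -/
def sptFn {ι : Type*} [Fintype ι] (K : Set (ι → ℝ)) (y : ι → ℝ) : ℝ :=
  sSup ((fun x => y ⬝ᵥ x) '' K)

/-- The Euclidean (2-)norm on `ι → ℝ`. -/
def euclNorm {ι : Type*} [Fintype ι] (y : ι → ℝ) : ℝ :=
  Real.sqrt (∑ i, y i ^ 2)

/-- The `p`-norm on `ℝ^m`, `p ∈ [1,∞]`. -/
def pnorm (p : ℝ≥0∞) [Fact (1 ≤ p)] {m : ℕ} (u : Fin m → ℝ) : ℝ :=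
  ‖(WithLp.equiv p (Fin m → ℝ)).symm u‖

/-- The (forward) reach set at time `t` of `ẋ = Ax + Bu`, from initial condition
`x₀`, over measurable inputs selected from the set-valued uncertainty `U`. -/
def reachSet {N M : Type*} [Fintype N] [DecidableEq N] [Fintype M]
    (A : Matrix N N ℝ) (B : Matrix N M ℝ) (x0 : N → ℝ) (t : ℝ)
    (U : ℝ → Set (M → ℝ)) : Set (N → ℝ) :=
  {x | ∃ u : ℝ → M → ℝ, Measurable u ∧ (∀ s ∈ Set.Icc 0 t, u s ∈ U s) ∧
    x = NormedSpace.exp (t • A) *ᵥ x0 +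
      ∫ s in (0:ℝ)..t, NormedSpace.exp (s • A) *ᵥ (B *ᵥ u s)}

/-- Block-diagonal integrator state matrix `A = blockdiag(A_1,…,A_m)`. -/
def blkA {m : ℕ} (r : Fin m → ℕ) : Matrix (Σ j, Fin (r j)) (Σ j, Fin (r j)) ℝ :=
  fun p q => if p.1 = q.1 ∧ (q.2 : ℕ) = (p.2 : ℕ) + 1 then 1 else 0

/-- Block-diagonal integrator input matrix `B = blockdiag(b_1,…,b_m)`, `b_j = e_{r_j}`. -/
def blkB {m : ℕ} (r : Fin m → ℕ) : Matrix (Σ j, Fin (r j)) (Fin m) ℝ :=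
  fun p k => if p.1 = k ∧ (p.2 : ℕ) = r p.1 - 1 then 1 else 0

/-- Single-input integrator reach set with scalar input confined to `[α(s), β(s)]`. -/
def reachSet1 {r : ℕ} (x0 : Fin r → ℝ) (t : ℝ) (α β : ℝ → ℝ) : Set (Fin r → ℝ) :=
  {x | ∃ u : ℝ → ℝ, Measurable u ∧ (∀ s ∈ Set.Icc 0 t, u s ∈ Set.Icc (α s) (β s)) ∧
    x = NormedSpace.exp (t • shiftMat r) *ᵥ x0 + ∫ s in (0:ℝ)..t, u s • xi r s}
/- Auxiliary lemmas -/

lemma aux_II {E : Type*} [NormedAddCommGroup E] {F : ℝ → E} {t M : ℝ}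
    (hm : AEStronglyMeasurable F volume) (ht : 0 ≤ t)
    (hb : ∀ s ∈ Set.Icc (0:ℝ) t, ‖F s‖ ≤ M) : IntervalIntegrable F volume 0 t := by
  rw [intervalIntegrable_iff_integrableOn_Ioc_of_le ht]
  refine Integrable.mono' (g := fun _ => M) ?_ hm.restrict ?_
  · exact integrableOn_const measure_Ioc_lt_top.ne
  · filter_upwards [ae_restrict_mem measurableSet_Ioc] with s hs
    exact hb s ⟨hs.1.le, hs.2⟩

lemma abs_le_euclNorm {ι : Type*} [Fintype ι] (y : ι → ℝ) (i : ι) :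
    |y i| ≤ euclNorm y := by
  rw [euclNorm, ← Real.sqrt_sq_eq_abs]
  exact Real.sqrt_le_sqrt (Finset.single_le_sum (f := fun j => y j ^ 2)
    (fun j _ => sq_nonneg _) (Finset.mem_univ i))

lemma euclNorm_pos {ι : Type*} [Fintype ι] {y : ι → ℝ} (hy : y ≠ 0) : 0 < euclNorm y := by
  obtain ⟨i, hi⟩ : ∃ i, y i ≠ 0 := by
    by_contra h
    push_neg at h
    exact hy (funext h)
  exact lt_of_lt_of_le (abs_pos.2 hi) (abs_le_euclNorm y i)

lemma euclNorm_smul {ι : Type*} [Fintype ι] (a : ℝ) (y : ι → ℝ) :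
    euclNorm (a • y) = |a| * euclNorm y := by
  rw [euclNorm, euclNorm]
  have h : ∑ i, (a • y) i ^ 2 = a ^ 2 * ∑ i, y i ^ 2 := by
    rw [Finset.mul_sum]
    refine Finset.sum_congr rfl fun i _ => ?_
    simp [mul_pow]
  rw [h, Real.sqrt_mul (sq_nonneg a), Real.sqrt_sq_eq_abs]

lemma euclNorm_single {ι : Type*} [Fintype ι] [DecidableEq ι] (i0 : ι) :
    euclNorm (Pi.single i0 1 : ι → ℝ) = 1 := by
  rw [euclNorm]
  have h : ∑ i, (Pi.single i0 1 : ι → ℝ) i ^ 2 = 1 := by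
    have : ∀ i, (Pi.single i0 1 : ι → ℝ) i ^ 2 = if i = i0 then 1 else 0 := by
      intro i
      by_cases h : i = i0 <;> simp [Pi.single_apply, h]
    rw [Finset.sum_congr rfl fun i _ => this i]
    simp
  rw [h, Real.sqrt_one]

lemma xi_continuous (r : ℕ) : Continuous (fun s => xi r s) :=
  continuous_pi fun _ => (continuous_pow _).div_const _

/-- dot product with a fixed vector, as a continuous linear map. -/
def dotCLM {r : ℕ} (y : Fin r → ℝ) : (Fin r → ℝ) →L[ℝ] ℝ :=
  LinearMap.toContinuousLinearMap
    { toFun := fun x => y ⬝ᵥ x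
      map_add' := fun a b => by simp [dotProduct_add]
      map_smul' := fun a b => by simp [dotProduct_smul] }

@[simp] lemma dotCLM_apply {r : ℕ} (y x : Fin r → ℝ) : dotCLM y x = y ⬝ᵥ x := rfl

/-- for single-input integrator agents with box input uncertainties, if the
optimal value `p̃*` of the convexified problem is negative, then the convexification is
lossless (`p̃* = p* < 0`) and the reach sets are disjoint. -/
theorem box_convexified_neg_implies_lossless_and_disjoint (r : ℕ) (hr : 1 ≤ r)
    (t : ℝ) (ht : 0 < t) (x0A x0B : Fin r → ℝ)
    (αA βA αB βB : ℝ → ℝ)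
    (hαA : ContinuousOn αA (Set.Icc 0 t)) (hβA : ContinuousOn βA (Set.Icc 0 t))
    (hαB : ContinuousOn αB (Set.Icc 0 t)) (hβB : ContinuousOn βB (Set.Icc 0 t))
    (hA : ∀ s ∈ Set.Icc (0:ℝ) t, αA s ≤ βA s)
    (hB : ∀ s ∈ Set.Icc (0:ℝ) t, αB s ≤ βB s)
    (XA XB : Set (Fin r → ℝ))
    (hXA : XA = reachSet1 x0A t αA βA) (hXB : XB = reachSet1 x0B t αB βB)
    (c : Fin r → ℝ)
    (hc : c = NormedSpace.exp (t • shiftMat r) *ᵥ (x0A - x0B) +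
      ∫ s in (0:ℝ)..t, ((βA s + αA s) / 2 - (βB s + αB s) / 2) • xi r s)
    (f : (Fin r → ℝ) → ℝ)
    (hf : f = fun y => c ⬝ᵥ y +
      ∫ s in (0:ℝ)..t, ((βA s - αA s) / 2 + (βB s - αB s) / 2) * |y ⬝ᵥ xi r s|)
    (ptil pstar : ℝ) (hptil : ptil = sInf (f '' {y | euclNorm y ≤ 1}))
    (hpstar : pstar = sInf (f '' {y | euclNorm y = 1}))
    (hneg : ptil < 0) :
    ptil = pstar ∧ pstar < 0 ∧ XA ∩ XB = ∅ := by
  -- basic facts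
  have hf0 : f 0 = 0 := by
    simp only [hf, dotProduct_zero, zero_dotProduct, abs_zero, mul_zero,
      intervalIntegral.integral_zero, add_zero]
  have hμnn : ∀ s ∈ Set.Icc (0:ℝ) t, 0 ≤ (βA s - αA s) / 2 + (βB s - αB s) / 2 := by
    intro s hs
    have h1 := hA s hs; have h2 := hB s hs
    linarith
  have hintnn : ∀ y : Fin r → ℝ,
      0 ≤ ∫ s in (0:ℝ)..t, ((βA s - αA s) / 2 + (βB s - αB s) / 2) * |y ⬝ᵥ xi r s| :=
    fun y => intervalIntegral.integral_nonneg ht.le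
      (fun s hs => mul_nonneg (hμnn s hs) (abs_nonneg _))
  have hlb : ∀ y : Fin r → ℝ, euclNorm y ≤ 1 → -(∑ i, |c i|) ≤ f y := by
    intro y hy
    simp only [hf]
    have h1 : |c ⬝ᵥ y| ≤ ∑ i, |c i| := by
      rw [dotProduct]
      refine (Finset.abs_sum_le_sum_abs _ _).trans (Finset.sum_le_sum fun i _ => ?_)
      rw [abs_mul]
      have h2 : |y i| ≤ 1 := (abs_le_euclNorm y i).trans hy
      nlinarith [abs_nonneg (c i)]
    have h3 := hintnn y
    have h4 := neg_abs_le (c ⬝ᵥ y)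
    linarith
  have hbdd : BddBelow (f '' {y | euclNorm y ≤ 1}) := by
    refine ⟨-(∑ i, |c i|), ?_⟩
    rintro v ⟨y, hy, rfl⟩
    exact hlb y hy
  have hball_ne : (f '' {y | euclNorm y ≤ 1}).Nonempty :=
    ⟨f 0, Set.mem_image_of_mem _ (by norm_num [euclNorm])⟩
  have hsub : f '' {y | euclNorm y = 1} ⊆ f '' {y | euclNorm y ≤ 1} :=
    Set.image_mono (fun y hy => le_of_eq hy)
  have i0 : Fin r := ⟨0, hr⟩
  have hsph_ne : (f '' {y | euclNorm y = 1}).Nonempty :=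
    ⟨f (Pi.single i0 1 : Fin r → ℝ), Set.mem_image_of_mem _ (euclNorm_single i0)⟩
  -- homogeneity
  have hhom : ∀ a : ℝ, 0 ≤ a → ∀ y : Fin r → ℝ, f (a • y) = a * f y := by
    intro a ha y
    simp only [hf]
    rw [dotProduct_smul]
    have h : (fun s => ((βA s - αA s) / 2 + (βB s - αB s) / 2) * |(a • y) ⬝ᵥ xi r s|)
        = fun s => a * (((βA s - αA s) / 2 + (βB s - αB s) / 2) * |y ⬝ᵥ xi r s|) := by
      funext s
      rw [smul_dotProduct, smul_eq_mul, abs_mul, abs_of_nonneg ha]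
      ring
    rw [h, intervalIntegral.integral_const_mul, smul_eq_mul]
    ring
  -- ptil ≤ pstar
  have h1 : ptil ≤ pstar := by
    rw [hptil, hpstar]
    exact csInf_le_csInf hbdd hsph_ne hsub
  -- pstar ≤ ptil
  have h2 : pstar ≤ ptil := by
    by_contra hcon
    push_neg at hcon
    set ε := min (pstar - ptil) (-ptil) with hεdef
    have hε0 : 0 < ε := lt_min (by linarith) (by linarith)
    have hε1 : ε ≤ pstar - ptil := min_le_left _ _
    have hε2 : ε ≤ -ptil := min_le_right _ _
    obtain ⟨v, hv, hvlt⟩ := exists_lt_of_csInf_lt hball_ne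
      (show sInf (f '' {y | euclNorm y ≤ 1}) < ptil + ε by rw [← hptil]; linarith)
    obtain ⟨y, hy, rfl⟩ := hv
    have hfy_neg : f y < 0 := by linarith
    have hy0 : y ≠ 0 := by
      intro h
      rw [h, hf0] at hfy_neg
      linarith
    have hn : 0 < euclNorm y := euclNorm_pos hy0
    have hmem : euclNorm ((euclNorm y)⁻¹ • y) = 1 := by
      rw [euclNorm_smul, abs_of_nonneg (by positivity), inv_mul_cancel₀ hn.ne']
    have hle : pstar ≤ f ((euclNorm y)⁻¹ • y) := by
      rw [hpstar]
      exact csInf_le (hbdd.mono hsub) (Set.mem_image_of_mem _ hmem)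
    have hfy' : f ((euclNorm y)⁻¹ • y) = (euclNorm y)⁻¹ * f y := hhom _ (by positivity) y
    have hy1 : euclNorm y ≤ 1 := hy
    have hinv1 : 1 ≤ (euclNorm y)⁻¹ := (one_le_inv₀ hn).2 hy1
    have hmono : f ((euclNorm y)⁻¹ • y) ≤ f y := by
      rw [hfy']
      nlinarith
    linarith
  -- disjointness
  have hdisj : XA ∩ XB = ∅ := by
    by_contra hne
    obtain ⟨x, hxA', hxB'⟩ := Set.nonempty_iff_ne_empty.2 hne
    rw [hXA] at hxA'
    rw [hXB] at hxB'
    obtain ⟨uA, hmA, huA, hxAeq⟩ := hxA'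
    obtain ⟨uB, hmB, huB, hxBeq⟩ := hxB'
    obtain ⟨CαA, hCαA⟩ := isCompact_Icc.exists_bound_of_continuousOn hαA
    obtain ⟨CβA, hCβA⟩ := isCompact_Icc.exists_bound_of_continuousOn hβA
    obtain ⟨CαB, hCαB⟩ := isCompact_Icc.exists_bound_of_continuousOn hαB
    obtain ⟨CβB, hCβB⟩ := isCompact_Icc.exists_bound_of_continuousOn hβB
    have hMA : ∀ s ∈ Set.Icc (0:ℝ) t, |uA s| ≤ max CαA CβA := by
      intro s hs
      have hb1 := abs_le.1 ((Real.norm_eq_abs _ ▸ hCαA s hs : |αA s| ≤ CαA))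
      have hb2 := abs_le.1 ((Real.norm_eq_abs _ ▸ hCβA s hs : |βA s| ≤ CβA))
      have hu1 := (huA s hs).1
      have hu2 := (huA s hs).2
      have hm1 := le_max_left CαA CβA
      have hm2 := le_max_right CαA CβA
      rw [abs_le]
      constructor <;> linarith
    have hMB : ∀ s ∈ Set.Icc (0:ℝ) t, |uB s| ≤ max CαB CβB := by
      intro s hs
      have hb1 := abs_le.1 ((Real.norm_eq_abs _ ▸ hCαB s hs : |αB s| ≤ CαB))
      have hb2 := abs_le.1 ((Real.norm_eq_abs _ ▸ hCβB s hs : |βB s| ≤ CβB))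
      have hu1 := (huB s hs).1
      have hu2 := (huB s hs).2
      have hm1 := le_max_left CαB CβB
      have hm2 := le_max_right CαB CβB
      rw [abs_le]
      constructor <;> linarith
    obtain ⟨Cξ, hCξ⟩ := (isCompact_Icc (a := (0:ℝ)) (b := t)).exists_bound_of_continuousOn (xi_continuous r).continuousOn
    have hνc : ContinuousOn (fun s => (βA s + αA s) / 2 - (βB s + αB s) / 2) (Set.Icc 0 t) :=
      ((hβA.add hαA).div_const 2).sub ((hβB.add hαB).div_const 2)
    have hmesξ : Measurable fun s => xi r s := (xi_continuous r).measurable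
    have IIA : IntervalIntegrable (fun s => uA s • xi r s) volume 0 t := by
      refine aux_II (M := (CαA ⊔ CβA) * Cξ) (hmA.smul hmesξ).aestronglyMeasurable ht.le (fun s hs => ?_)
      rw [norm_smul, Real.norm_eq_abs]
      exact mul_le_mul (hMA s hs) (hCξ s hs) (norm_nonneg _) ((abs_nonneg _).trans (hMA s hs))
    have IIB : IntervalIntegrable (fun s => uB s • xi r s) volume 0 t := by
      refine aux_II (M := (CαB ⊔ CβB) * Cξ) (hmB.smul hmesξ).aestronglyMeasurable ht.le (fun s hs => ?_)
      rw [norm_smul, Real.norm_eq_abs]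
      exact mul_le_mul (hMB s hs) (hCξ s hs) (norm_nonneg _) ((abs_nonneg _).trans (hMB s hs))
    have IIν : IntervalIntegrable
        (fun s => ((βA s + αA s) / 2 - (βB s + αB s) / 2) • xi r s) volume 0 t := by
      apply ContinuousOn.intervalIntegrable
      rw [Set.uIcc_of_le ht.le]
      exact hνc.smul (xi_continuous r).continuousOn
    have hfnn : ∀ y : Fin r → ℝ, 0 ≤ f y := by
      intro y
      have hgc : Continuous fun s => y ⬝ᵥ xi r s := by
        simp only [dotProduct]
        exact continuous_finset_sum _ fun i _ =>
          continuous_const.mul ((continuous_apply i).comp (xi_continuous r))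
      obtain ⟨Cg, hCg⟩ := (isCompact_Icc (a := (0:ℝ)) (b := t)).exists_bound_of_continuousOn hgc.continuousOn
      have IIgA : IntervalIntegrable (fun s => uA s * (y ⬝ᵥ xi r s)) volume 0 t := by
        refine aux_II (M := (CαA ⊔ CβA) * Cg) (hmA.mul hgc.measurable).aestronglyMeasurable ht.le (fun s hs => ?_)
        rw [Real.norm_eq_abs, abs_mul]
        refine mul_le_mul (hMA s hs) ?_ (abs_nonneg _) ((abs_nonneg _).trans (hMA s hs))
        rw [← Real.norm_eq_abs]
        exact hCg s hs
      have IIgB : IntervalIntegrable (fun s => uB s * (y ⬝ᵥ xi r s)) volume 0 t := by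
        refine aux_II (M := (CαB ⊔ CβB) * Cg) (hmB.mul hgc.measurable).aestronglyMeasurable ht.le (fun s hs => ?_)
        rw [Real.norm_eq_abs, abs_mul]
        refine mul_le_mul (hMB s hs) ?_ (abs_nonneg _) ((abs_nonneg _).trans (hMB s hs))
        rw [← Real.norm_eq_abs]
        exact hCg s hs
      have IIgν : IntervalIntegrable
          (fun s => ((βA s + αA s) / 2 - (βB s + αB s) / 2) * (y ⬝ᵥ xi r s)) volume 0 t := by
        apply ContinuousOn.intervalIntegrable
        rw [Set.uIcc_of_le ht.le]
        exact hνc.mul hgc.continuousOn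
      have IIμ : IntervalIntegrable
          (fun s => ((βA s - αA s) / 2 + (βB s - αB s) / 2) * |y ⬝ᵥ xi r s|) volume 0 t := by
        apply ContinuousOn.intervalIntegrable
        rw [Set.uIcc_of_le ht.le]
        exact (((hβA.sub hαA).div_const 2).add ((hβB.sub hαB).div_const 2)).mul
          hgc.abs.continuousOn
      have hdot : ∀ u : ℝ → ℝ, IntervalIntegrable (fun s => u s • xi r s) volume 0 t →
          y ⬝ᵥ (∫ s in (0:ℝ)..t, u s • xi r s) = ∫ s in (0:ℝ)..t, u s * (y ⬝ᵥ xi r s) := by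
        intro u hu
        rw [← dotCLM_apply y, ← ContinuousLinearMap.intervalIntegral_comp_comm _ hu]
        refine intervalIntegral.integral_congr fun s _ => ?_
        simp only [dotCLM_apply, dotProduct_smul, smul_eq_mul]
      have hEq : NormedSpace.exp (t • shiftMat r) *ᵥ x0A
            - NormedSpace.exp (t • shiftMat r) *ᵥ x0B
          = (∫ s in (0:ℝ)..t, uB s • xi r s) - (∫ s in (0:ℝ)..t, uA s • xi r s) := by
        have h := hxAeq.symm.trans hxBeq
        rw [sub_eq_sub_iff_add_eq_add, h]
        abel
      have hcy : c ⬝ᵥ y = ∫ s in (0:ℝ)..t,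
          (uB s - uA s + ((βA s + αA s) / 2 - (βB s + αB s) / 2)) * (y ⬝ᵥ xi r s) := by
        rw [hc, add_dotProduct, Matrix.mulVec_sub, hEq, sub_dotProduct,
          dotProduct_comm _ y, dotProduct_comm _ y, dotProduct_comm _ y,
          hdot uB IIB, hdot uA IIA,
          hdot (fun s => (βA s + αA s) / 2 - (βB s + αB s) / 2) IIν,
          ← intervalIntegral.integral_sub IIgB IIgA,
          ← intervalIntegral.integral_add (IIgB.sub IIgA) IIgν]
        refine intervalIntegral.integral_congr fun s _ => ?_
        ring
      have IIw : IntervalIntegrable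
          (fun s => (uB s - uA s + ((βA s + αA s) / 2 - (βB s + αB s) / 2)) * (y ⬝ᵥ xi r s))
          volume 0 t := by
        have hfe : (fun s => (uB s - uA s + ((βA s + αA s) / 2 - (βB s + αB s) / 2)) * (y ⬝ᵥ xi r s))
            = fun s => (uB s * (y ⬝ᵥ xi r s) - uA s * (y ⬝ᵥ xi r s))
              + ((βA s + αA s) / 2 - (βB s + αB s) / 2) * (y ⬝ᵥ xi r s) := by
          funext s; ring
        rw [hfe]
        exact (IIgB.sub IIgA).add IIgν
      simp only [hf]
      rw [hcy, ← intervalIntegral.integral_add IIw IIμ]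
      refine intervalIntegral.integral_nonneg ht.le (fun s hs => ?_)
      have hu1 := (huA s hs).1
      have hu2 := (huA s hs).2
      have hu3 := (huB s hs).1
      have hu4 := (huB s hs).2
      have habs : |uB s - uA s + ((βA s + αA s) / 2 - (βB s + αB s) / 2)|
          ≤ (βA s - αA s) / 2 + (βB s - αB s) / 2 := by
        rw [abs_le]
        constructor <;> linarith
      have h3 : |(uB s - uA s + ((βA s + αA s) / 2 - (βB s + αB s) / 2)) * (y ⬝ᵥ xi r s)|
          ≤ ((βA s - αA s) / 2 + (βB s - αB s) / 2) * |y ⬝ᵥ xi r s| := by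
        rw [abs_mul]
        exact mul_le_mul_of_nonneg_right habs (abs_nonneg _)
      have h4 := neg_abs_le
        ((uB s - uA s + ((βA s + αA s) / 2 - (βB s + αB s) / 2)) * (y ⬝ᵥ xi r s))
      linarith
    have hge : (0:ℝ) ≤ ptil := by
      rw [hptil]
      apply Real.sInf_nonneg
      rintro v ⟨y, -, rfl⟩
      exact hfnn y
    linarith
  exact ⟨le_antisymm h1 h2, by linarith, hdisj⟩
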